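/- Let k be a field, n ≥ 1 an integer, R = k[X]/(X^n), and x the image of X in R. Let V be a finite free R-module and W ⊆ V an R-submodule with dim_k W = n·s for some natural number s. Then W is a free R-module if and only if the kernel of the multiplication-by-x map restricted to W has k-dimension exactly s (equivalently, multiplication by x on W has the maximal possible rank (n−1)·s). -/

import Mathlib

set_option synthInstance.maxHeartbeats 400000

open Polynomial

/-- The ring of truncated polynomials `R = k[X]/(X^n)`. -/
abbrev TruncPoly (k : Type*) [Field k] (n : ℕ) : Type _ :=
  k[X] ⧸ Ideal.span {(X : k[X]) ^ n}

/-- The image `x` of `X` in `R = k[X]/(X^n)`. -/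
noncomputable abbrev truncX (k : Type*) [Field k] (n : ℕ) : TruncPoly k n :=
  Ideal.Quotient.mk _ (X : k[X])

open Module

section Aux
variable {K M : Type*} [Field K] [AddCommGroup M] [Module K M]

lemma aux_step [FiniteDimensional K M] (f : M →ₗ[K] M) (m : ℕ) :
    finrank K (LinearMap.range (f ^ m)) ≤
      finrank K (LinearMap.range (f ^ (m + 1))) + finrank K (LinearMap.ker f) := by
  have h1 := LinearMap.finrank_range_add_finrank_ker (f.domRestrict (LinearMap.range (f ^ m)))
  have hr : LinearMap.range (f.domRestrict (LinearMap.range (f ^ m)))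
      = LinearMap.range (f ^ (m + 1)) := by
    rw [LinearMap.range_domRestrict, pow_succ', Module.End.mul_eq_comp, LinearMap.range_comp]
  have hk : finrank K (LinearMap.ker (f.domRestrict (LinearMap.range (f ^ m))))
      ≤ finrank K (LinearMap.ker f) := by
    rw [LinearMap.ker_domRestrict]
    rw [← Submodule.finrank_map_subtype_eq, Submodule.map_comap_subtype]
    exact Submodule.finrank_mono inf_le_right
  rw [hr] at h1
  omega

lemma aux_bound [FiniteDimensional K M] (f : M →ₗ[K] M) (m : ℕ) :
    finrank K M ≤ finrank K (LinearMap.range (f ^ m)) + m * finrank K (LinearMap.ker f) := by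
  induction m with
  | zero =>
    rw [pow_zero, Module.End.one_eq_id, LinearMap.range_id, finrank_top]; omega
  | succ m ih =>
    have := aux_step f m
    have h2 : (m + 1) * finrank K (LinearMap.ker f)
        = m * finrank K (LinearMap.ker f) + finrank K (LinearMap.ker f) := by ring
    omega

lemma aux_span (f : M →ₗ[K] M) (N' : Submodule K M) (hN : Submodule.map f N' ≤ N')
    (h0 : ⊤ ≤ N' ⊔ LinearMap.range f) {m : ℕ} (hf : f ^ m = 0) : N' = ⊤ := by
  have key : ∀ i, (⊤ : Submodule K M) ≤ N' ⊔ LinearMap.range (f ^ i) := by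
    intro i
    induction i with
    | zero => simp [pow_zero, Module.End.one_eq_id, LinearMap.range_id]
    | succ i ih =>
      have h2 : LinearMap.range f ≤ N' ⊔ LinearMap.range (f ^ (i + 1)) := by
        rw [← Submodule.map_top f]
        calc Submodule.map f ⊤ ≤ Submodule.map f (N' ⊔ LinearMap.range (f ^ i)) :=
              Submodule.map_mono ih
          _ = Submodule.map f N' ⊔ Submodule.map f (LinearMap.range (f ^ i)) :=
              Submodule.map_sup _ _ _
          _ ≤ N' ⊔ LinearMap.range (f ^ (i + 1)) := by
              refine sup_le_sup hN (le_of_eq ?_)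
              rw [pow_succ', Module.End.mul_eq_comp, LinearMap.range_comp]
      exact h0.trans (sup_le le_sup_left h2)
  have := key m
  rw [hf, LinearMap.range_zero, sup_bot_eq] at this
  exact top_le_iff.mp this

end Aux


section TP
variable (k : Type*) [Field k] (n : ℕ)

theorem tp_finrank (hn : 1 ≤ n) : finrank k (TruncPoly k n) = n := by
  have hne : (X : k[X]) ^ n ≠ 0 := pow_ne_zero _ X_ne_zero
  show finrank k (AdjoinRoot ((X : k[X]) ^ n)) = n
  rw [(AdjoinRoot.powerBasis hne).finrank]
  simp [AdjoinRoot.powerBasis]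

theorem tp_fd : FiniteDimensional k (TruncPoly k n) := by
  have hne : (X : k[X]) ^ n ≠ 0 := pow_ne_zero _ X_ne_zero
  exact Module.Finite.of_basis (AdjoinRoot.powerBasis hne).basis

theorem tp_pow_zero : (truncX k n) ^ n = 0 := by
  rw [← map_pow, Ideal.Quotient.eq_zero_iff_mem]
  exact Ideal.subset_span rfl

theorem tp_decomp (r : TruncPoly k n) : ∃ c q, r = algebraMap k _ c + truncX k n * q := by
  obtain ⟨p, rfl⟩ := Ideal.Quotient.mk_surjective r
  refine ⟨p.coeff 0, Ideal.Quotient.mk _ p.divX, ?_⟩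
  conv_lhs => rw [← X_mul_divX_add p]
  rw [map_add, map_mul, add_comm,
    IsScalarTower.algebraMap_apply k k[X] (TruncPoly k n), Ideal.Quotient.algebraMap_eq,
    algebraMap_eq]
end TP

set_option maxHeartbeats 1000000 in
/-- Let `R = k[X]/(X^n)` (`n ≥ 1`), `V` a finite free `R`-module and `W ⊆ V` an
`R`-submodule with `dim_k W = n·s`.  Then `W` is a free `R`-module if and only if the kernel of
multiplication by `x` on `W` has `k`-dimension exactly `s`. -/
theorem free_submodule_iff_ker_smul_finrank (k : Type*) [Field k] (n : ℕ) (hn : 1 ≤ n)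
    (V : Type*) [AddCommGroup V] [Module (TruncPoly k n) V]
    [Module k V] [IsScalarTower k (TruncPoly k n) V]
    [Module.Free (TruncPoly k n) V] [Module.Finite (TruncPoly k n) V]
    (W : Submodule (TruncPoly k n) V) (s : ℕ)
    (hW : Module.finrank k W = n * s) :
    Module.Free (TruncPoly k n) W ↔
      Module.finrank k
        (LinearMap.ker ((LinearMap.lsmul (TruncPoly k n) W (truncX k n)).restrictScalars k)) = s := by
  haveI : FiniteDimensional k (TruncPoly k n) := tp_fd k n
  haveI hWfin : Module.Finite (TruncPoly k n) W :=
    Module.Finite.iff_fg.mpr (IsNoetherian.noetherian W)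
  haveI : FiniteDimensional k W := Module.Finite.trans (TruncPoly k n) W
  set x := truncX k n with hx
  set f := (LinearMap.lsmul (TruncPoly k n) W x).restrictScalars k with hf
  have happly : ∀ w : W, f w = x • w := fun w => rfl
  have hpow : ∀ (m : ℕ) (w : W), (f ^ m) w = (x ^ m) • w := by
    intro m
    induction m with
    | zero => intro w; simp
    | succ m ih =>
      intro w
      rw [pow_succ, Module.End.mul_apply, happly, ih, pow_succ]
      exact (mul_smul (x ^ m) x w).symm
  have hxn : x ^ n = 0 := tp_pow_zero k n
  have hfn : f ^ n = 0 := by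
    apply LinearMap.ext
    intro w
    rw [hpow, hxn, LinearMap.zero_apply]
    exact zero_smul (TruncPoly k n) w
  set t := finrank k (LinearMap.ker f) with ht
  -- always s ≤ t
  have hst : s ≤ t := by
    have hb := aux_bound f n
    rw [hfn, LinearMap.range_zero, finrank_bot, ← ht] at hb
    rw [hW] at hb
    have : n * s ≤ n * t := by omega
    exact Nat.le_of_mul_le_mul_left this (by omega)
  constructor
  · -- free → t = s : enough t ≤ s
    intro hfree
    let ι := Module.Free.ChooseBasisIndex (TruncPoly k n) W
    let b : Basis ι (TruncPoly k n) W := Module.Free.chooseBasis _ _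
    haveI : Fintype ι := Module.Free.ChooseBasisIndex.fintype _ _
    -- card ι = s
    have hcard : Fintype.card ι = s := by
      have e1 : finrank k W = finrank k (ι →₀ TruncPoly k n) :=
        (b.repr.restrictScalars k).finrank_eq
      have e2 : finrank k (ι →₀ TruncPoly k n) = finrank k (ι → TruncPoly k n) :=
        (Finsupp.linearEquivFunOnFinite k (TruncPoly k n) ι).finrank_eq
      rw [e2, Module.finrank_pi_fintype, Finset.sum_const, smul_eq_mul, Finset.card_univ,
        tp_finrank k n hn] at e1
      have := hW
      rw [e1] at this
      rw [Nat.mul_comm n s] at this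
      exact Nat.eq_of_mul_eq_mul_right (by omega) this
    -- coker bound
    have hQt : finrank k (↥W ⧸ LinearMap.range f) = t := by
      have h1 := Submodule.finrank_quotient_add_finrank (LinearMap.range f)
      have h2 := LinearMap.finrank_range_add_finrank_ker f
      rw [← ht] at h2
      omega
    -- Q spanned by images of basis
    have hspan : Submodule.span k (Set.range fun i => (LinearMap.range f).mkQ (b i)) = ⊤ := by
      rw [eq_top_iff]
      rintro q -
      obtain ⟨w, rfl⟩ := Submodule.mkQ_surjective _ q
      rw [← b.sum_repr w, map_sum]
      refine Submodule.sum_mem _ fun i _ => ?_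
      obtain ⟨c, q', hc⟩ := tp_decomp k n (b.repr w i)
      rw [hc, add_smul, map_add]
      have hz : (LinearMap.range f).mkQ ((x * q') • b i) = 0 := by
        rw [Submodule.mkQ_apply, Submodule.Quotient.mk_eq_zero]
        exact ⟨q' • b i, (mul_smul x q' (b i)).symm⟩
      rw [hz, add_zero, algebraMap_smul, map_smul]
      exact Submodule.smul_mem _ _ (Submodule.subset_span ⟨i, rfl⟩)
    have hQle : finrank k (↥W ⧸ LinearMap.range f) ≤ s := by
      let g := Finsupp.linearCombination k (fun i => (LinearMap.range f).mkQ (b i))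
      have hg : LinearMap.range g = ⊤ := by
        rw [Finsupp.range_linearCombination, hspan]
      have h1 : finrank k (↥W ⧸ LinearMap.range f) = finrank k (LinearMap.range g) := by
        rw [hg, finrank_top]
      have h2 : finrank k (LinearMap.range g) ≤ finrank k (ι →₀ k) :=
        LinearMap.finrank_range_le g
      have h3 : finrank k (ι →₀ k) = Fintype.card ι := by
        rw [(Finsupp.linearEquivFunOnFinite k k ι).finrank_eq, Module.finrank_pi]
      omega
    omega
  · -- t = s → free
    intro hts
    obtain ⟨U, hU⟩ := Submodule.exists_isCompl (LinearMap.range f)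
    have hdimU : finrank k U = s := by
      have h1 := Submodule.finrank_add_eq_of_isCompl hU
      have h2 := LinearMap.finrank_range_add_finrank_ker f
      rw [← ht] at h2
      omega
    let bU : Basis (Fin s) k U := Module.finBasisOfFinrankEq k U hdimU
    let v : Fin s → W := fun i => (bU i : W)
    let N := Submodule.span (TruncPoly k n) (Set.range v)
    have hUspan : U ≤ Submodule.restrictScalars k N := by
      have h1 : U = Submodule.span k (Set.range v) := by
        have : Set.range v = U.subtype '' Set.range bU := by
          rw [← Set.range_comp]; rfl
        rw [this, ← Submodule.map_span, bU.span_eq, Submodule.map_top, Submodule.range_subtype]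
      rw [h1]
      exact Submodule.span_le_restrictScalars k _ _
    have hNtop : N = ⊤ := by
      refine (Submodule.restrictScalars_eq_top_iff k (TruncPoly k n) ↥W).mp (aux_span f _ ?_ ?_ hfn)
      · rintro y ⟨w, hw, rfl⟩
        exact N.smul_mem x hw
      · rw [← hU.codisjoint.eq_top]
        exact sup_le le_sup_right (hUspan.trans le_sup_left)
    let φ : (Fin s →₀ TruncPoly k n) →ₗ[TruncPoly k n] W :=
      Finsupp.linearCombination (TruncPoly k n) v
    have hφsurj : Function.Surjective φ := by
      rw [← LinearMap.range_eq_top]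
      show LinearMap.range (Finsupp.linearCombination (TruncPoly k n) v) = ⊤
      rw [Finsupp.range_linearCombination]
      exact hNtop
    haveI : FiniteDimensional k (Fin s →₀ TruncPoly k n) :=
      Module.Finite.equiv (Finsupp.linearEquivFunOnFinite k (TruncPoly k n) (Fin s)).symm
    have hdim : finrank k (Fin s →₀ TruncPoly k n) = finrank k W := by
      rw [(Finsupp.linearEquivFunOnFinite k (TruncPoly k n) (Fin s)).finrank_eq,
        Module.finrank_pi_fintype, Finset.sum_const, smul_eq_mul, Finset.card_univ,
        Fintype.card_fin, tp_finrank k n hn, hW, Nat.mul_comm]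
    have hφinj : Function.Injective φ :=
      (LinearMap.injective_iff_surjective_of_finrank_eq_finrank
        (f := φ.restrictScalars k) hdim).mpr hφsurj
    exact Module.Free.of_equiv (LinearEquiv.ofBijective φ ⟨hφinj, hφsurj⟩)
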